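/- Let S_Z be an orbital fuzzy iterated function system and u ∈ F*_S. Then the map U : [u]^* → F*_X defined by U(x) = u_x (the limit of Z^[n](δ_x)) is continuous, where [u]^* carries the metric of X and F*_X the metric d_∞. -/

import Mathlib

open Metric Filter Topology Set

/-- The orbit of a point `x` under the family of maps `f i`:
`x` together with all images of `x` under finite compositions of the `f i`. -/
def orbitIFS {X I : Type*} (f : I → X → X) (x : X) : Set X :=
  ⋃ l : List I, {l.foldr (fun i y => f i y) x}

/-- The fractal (Hutchinson–Barnsley) operator `K ↦ ⋃ i, f i '' K`. -/
def fractalOp {X I : Type*} (f : I → X → X) (K : Set X) : Set X :=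
  ⋃ i, f i '' K

/-- Image of a fuzzy set under a map: `f(u)(y) = sup_{x ∈ f⁻¹ y} u x` (0 if empty). -/
noncomputable def fuzzyImage {X : Type*} (g : X → X) (u : X → ℝ) : X → ℝ :=
  fun y => sSup (u '' (g ⁻¹' {y}))

/-- The fuzzy Hutchinson–Barnsley operator `Z(u) = ∨ i, ρ i (f i (u))`. -/
noncomputable def Zop {X I : Type*} (f : I → X → X) (ρ : I → ℝ → ℝ) (u : X → ℝ) : X → ℝ :=
  fun y => ⨆ i, ρ i (fuzzyImage (f i) u y)

/-- The metric `d_∞(u,v) = sup_{α ∈ (0,1]} h([u]^α, [v]^α)`. -/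
noncomputable def dInfty {X : Type*} [MetricSpace X] (u v : X → ℝ) : ℝ :=
  ⨆ α : Ioc (0:ℝ) 1, hausdorffDist {x | (α:ℝ) ≤ u x} {x | (α:ℝ) ≤ v x}

/-- The support of a fuzzy set: the closure of `{x | 0 < u x}`. -/
def fsupp {X : Type*} [MetricSpace X] (u : X → ℝ) : Set X := closure {x | 0 < u x}

/-- The crisp fuzzy point `δ_s`. -/
def fdelta {X : Type*} [DecidableEq X] (s : X) : X → ℝ := fun t => if t = s then 1 else 0

/-- `u^x` : the restriction of `u` to the closure of the orbit of `w` (zero outside). -/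
noncomputable def restrictO {X I : Type*} [MetricSpace X] (f : I → X → X) (u : X → ℝ)
    (w : X) : X → ℝ :=
  (closure (orbitIFS f w)).indicator u

/-- A normal compactly supported fuzzy set (with values in `[0,1]`). -/
def IsFuzzyN {X : Type*} [MetricSpace X] (u : X → ℝ) : Prop :=
  (∀ x, u x ∈ Icc (0:ℝ) 1) ∧ (∃ x, u x = 1) ∧ IsCompact (fsupp u)

/-- An upper semicontinuous normal compactly supported fuzzy set: membership in `F*_X`. -/
def IsFuzzyStar {X : Type*} [MetricSpace X] (u : X → ℝ) : Prop :=
  IsFuzzyN u ∧ UpperSemicontinuous u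

/-- Membership in `F*_S`: for each point of positive membership there is an orbit
containing it together with a point of membership one. -/
def InFS {X I : Type*} [MetricSpace X] (f : I → X → X) (u : X → ℝ) : Prop :=
  IsFuzzyStar u ∧ ∀ x, 0 < u x → ∃ w y, x ∈ orbitIFS f w ∧ y ∈ orbitIFS f w ∧ u y = 1

/-- The orbital contraction condition. -/
def OrbitalContr {X I : Type*} [MetricSpace X] (f : I → X → X) (C : ℝ) : Prop :=
  ∀ i x, ∀ y ∈ orbitIFS f x, ∀ z ∈ orbitIFS f x, dist (f i y) (f i z) ≤ C * dist y z

/-- An admissible system of grey level maps. -/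
def Admissible {I : Type*} (ρ : I → ℝ → ℝ) : Prop :=
  (∀ i, ρ i 0 = 0) ∧ (∀ i, MonotoneOn (ρ i) (Icc (0:ℝ) 1)) ∧
  (∀ i, ∀ t ∈ Icc (0:ℝ) 1, ContinuousWithinAt (ρ i) (Ici t) t) ∧
  (∀ i, ∀ t ∈ Icc (0:ℝ) 1, ρ i t ∈ Icc (0:ℝ) 1) ∧ (∃ j, ρ j 1 = 1)

set_option linter.unusedSectionVars false

section Aux

variable {X I : Type*} [MetricSpace X] [DecidableEq X] [Finite I] [Nonempty I]

/-! ### Words -/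

/-- fold of a word of maps -/
def wfold (f : I → X → X) (l : List I) (x : X) : X := l.foldr (fun i y => f i y) x

lemma wfold_nil (f : I → X → X) (x : X) : wfold f [] x = x := rfl

lemma wfold_cons (f : I → X → X) (i : I) (l : List I) (x : X) :
    wfold f (i :: l) x = f i (wfold f l x) := rfl

lemma wfold_append (f : I → X → X) (l m : List I) (x : X) :
    wfold f (l ++ m) x = wfold f l (wfold f m x) := List.foldr_append ..

lemma wfold_mem_orbit (f : I → X → X) (l : List I) (x : X) :
    wfold f l x ∈ orbitIFS f x := Set.mem_iUnion.2 ⟨l, rfl⟩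

lemma wfold_orbit_mem (f : I → X → X) {a x : X} (ha : a ∈ orbitIFS f x) (l : List I) :
    wfold f l a ∈ orbitIFS f x := by
  rcases Set.mem_iUnion.1 ha with ⟨m, hm⟩
  rw [Set.mem_singleton_iff] at hm
  rw [hm]
  show wfold f l (wfold f m x) ∈ _
  rw [← wfold_append]
  exact wfold_mem_orbit f _ x

lemma continuous_wfold (f : I → X → X) (hcont : ∀ i, Continuous (f i)) (l : List I) :
    Continuous fun x => wfold f l x := by
  induction l with
  | nil => exact continuous_id
  | cons i l ih => exact (hcont i).comp ih

lemma dist_wfold {f : I → X → X} {C : ℝ} (horb : OrbitalContr f C) (hC0 : 0 ≤ C)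
    {x a b : X} (ha : a ∈ orbitIFS f x) (hb : b ∈ orbitIFS f x) (l : List I) :
    dist (wfold f l a) (wfold f l b) ≤ C ^ l.length * dist a b := by
  induction l with
  | nil => simp [wfold_nil]
  | cons i l ih =>
    rw [wfold_cons, wfold_cons, List.length_cons]
    calc dist (f i (wfold f l a)) (f i (wfold f l b)) ≤ C * dist (wfold f l a) (wfold f l b) :=
          horb i x _ (wfold_orbit_mem f ha l) _ (wfold_orbit_mem f hb l)
      _ ≤ C * (C ^ l.length * dist a b) := by
          exact mul_le_mul_of_nonneg_left ih hC0
      _ = C ^ (l.length + 1) * dist a b := by ring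

/-! ### Grey levels of words -/

/-- grey level of a word -/
def gfold (ρ : I → ℝ → ℝ) (l : List I) : ℝ := l.foldr (fun i t => ρ i t) 1

variable {ρ : I → ℝ → ℝ}

lemma gfold_seed (hρ : Admissible ρ) (l : List I) {a b : ℝ}
    (ha : a ∈ Icc (0:ℝ) 1) (hb : b ∈ Icc (0:ℝ) 1) (hab : a ≤ b) :
    l.foldr (fun i t => ρ i t) a ∈ Icc (0:ℝ) 1 ∧ l.foldr (fun i t => ρ i t) b ∈ Icc (0:ℝ) 1 ∧
      l.foldr (fun i t => ρ i t) a ≤ l.foldr (fun i t => ρ i t) b := by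
  induction l with
  | nil => exact ⟨ha, hb, hab⟩
  | cons i l ih =>
    obtain ⟨h1, h2, h3⟩ := ih
    exact ⟨hρ.2.2.2.1 i _ h1, hρ.2.2.2.1 i _ h2, hρ.2.1 i h1 h2 h3⟩

lemma gfold_mem (hρ : Admissible ρ) (l : List I) : gfold ρ l ∈ Icc (0:ℝ) 1 :=
  (gfold_seed hρ l (by norm_num) (by norm_num) le_rfl).1

lemma gfold_concat_le (hρ : Admissible ρ) (l : List I) (i : I) :
    gfold ρ (l ++ [i]) ≤ gfold ρ l := by
  have h1 : ρ i 1 ∈ Icc (0:ℝ) 1 := hρ.2.2.2.1 i 1 (by norm_num)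
  have := gfold_seed hρ l h1 (by norm_num) h1.2
  simpa [gfold, List.foldr_append] using this.2.2

lemma gfold_concat_one (hρ : Admissible ρ) (l : List I) {j : I} (hj : ρ j 1 = 1) :
    gfold ρ (l ++ [j]) = gfold ρ l := by
  simp [gfold, List.foldr_append, hj]

lemma gfold_replicate {j : I} (hj : ρ j 1 = 1) (n : ℕ) :
    gfold ρ (List.replicate n j) = 1 := by
  induction n with
  | zero => rfl
  | succ n ih => rw [List.replicate_succ]; show ρ j (gfold ρ (List.replicate n j)) = 1
                 rw [ih, hj]

end Aux

section Aux2

variable {X I : Type*} [MetricSpace X] [DecidableEq X] [Finite I] [Nonempty I]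
variable {f : I → X → X} {ρ : I → ℝ → ℝ}

lemma bddAbove_image {v : X → ℝ} (hv : ∀ z, v z ∈ Icc (0:ℝ) 1) (s : Set X) :
    BddAbove (v '' s) := by
  refine ⟨1, ?_⟩
  rintro a ⟨z, _, rfl⟩
  exact (hv z).2

lemma sSup_image_mem {v : X → ℝ} (hv : ∀ z, v z ∈ Icc (0:ℝ) 1) (s : Set X) :
    sSup (v '' s) ∈ Icc (0:ℝ) 1 := by
  rcases s.eq_empty_or_nonempty with rfl | hs
  · simp [Real.sSup_empty]
  · constructor
    · exact Real.sSup_nonneg (by rintro a ⟨z, _, rfl⟩; exact (hv z).1)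
    · exact csSup_le (hs.image v) (by rintro a ⟨z, _, rfl⟩; exact (hv z).2)

lemma fdelta_mem (y z : X) : fdelta y z ∈ Icc (0:ℝ) 1 := by
  unfold fdelta; split_ifs <;> norm_num

lemma Zop_mem (hρ : Admissible ρ) {v : X → ℝ} (hv : ∀ z, v z ∈ Icc (0:ℝ) 1) (z : X) :
    Zop f ρ v z ∈ Icc (0:ℝ) 1 := by
  have hterm : ∀ i, ρ i (fuzzyImage (f i) v z) ∈ Icc (0:ℝ) 1 := fun i =>
    hρ.2.2.2.1 i _ (sSup_image_mem hv _)
  constructor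
  · exact Real.iSup_nonneg fun i => (hterm i).1
  · exact ciSup_le fun i => (hterm i).2

lemma Zit_mem (hρ : Admissible ρ) (y : X) (n : ℕ) (z : X) :
    (Zop f ρ)^[n] (fdelta y) z ∈ Icc (0:ℝ) 1 := by
  induction n generalizing z with
  | zero => exact fdelta_mem y z
  | succ n ih => rw [Function.iterate_succ_apply']; exact Zop_mem hρ ih z

/-- (i): lower bound for iterate values on word images. -/
lemma gfold_le_Zit (hρ : Admissible ρ) (y : X) (l : List I) :
    gfold ρ l ≤ (Zop f ρ)^[l.length] (fdelta y) (wfold f l y) := by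
  induction l with
  | nil => simp [gfold, wfold_nil, fdelta]
  | cons i l ih =>
    rw [List.length_cons, Function.iterate_succ_apply', wfold_cons]
    set v := (Zop f ρ)^[l.length] (fdelta y) with hv
    have hvm : ∀ z, v z ∈ Icc (0:ℝ) 1 := Zit_mem hρ y l.length
    have hsup : v (wfold f l y) ≤ fuzzyImage (f i) v (f i (wfold f l y)) := by
      apply le_csSup (bddAbove_image hvm _)
      exact ⟨wfold f l y, by simp, rfl⟩
    have hmono : ρ i (gfold ρ l) ≤ ρ i (fuzzyImage (f i) v (f i (wfold f l y))) :=
      hρ.2.1 i (gfold_mem hρ l) (sSup_image_mem hvm _) (le_trans ih hsup)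
    refine le_trans hmono ?_
    exact le_ciSup (f := fun j : I => ρ j (fuzzyImage (f j) v (f i (wfold f l y))))
      (Set.Finite.bddAbove (Set.finite_range _)) i

/-- (ii): every point of positive iterate value comes from a word. -/
lemma Zit_le_gfold (hρ : Admissible ρ) (y : X) :
    ∀ (n : ℕ) (z : X) (α : ℝ), 0 < α → α ≤ (Zop f ρ)^[n] (fdelta y) z →
      ∃ l : List I, l.length = n ∧ α ≤ gfold ρ l ∧ wfold f l y = z := by
  intro n
  induction n with
  | zero =>
    intro z α hα h
    simp only [Function.iterate_zero, id_eq] at h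
    by_cases hz : z = y
    · subst hz
      refine ⟨[], rfl, ?_, rfl⟩
      simpa [fdelta, gfold] using h
    · exfalso; simp only [fdelta, if_neg hz] at h; linarith
  | succ n ih =>
    intro z α hα h
    rw [Function.iterate_succ_apply'] at h
    set v := (Zop f ρ)^[n] (fdelta y) with hvdef
    have hvm : ∀ w, v w ∈ Icc (0:ℝ) 1 := Zit_mem hρ y n
    obtain ⟨i, hi⟩ := Finite.exists_max fun i => ρ i (fuzzyImage (f i) v z)
    have hαi : α ≤ ρ i (fuzzyImage (f i) v z) := le_trans h (ciSup_le hi)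
    set m := fuzzyImage (f i) v z with hmdef
    have hm : m ∈ Icc (0:ℝ) 1 := sSup_image_mem hvm _
    have hm0 : 0 < m := by
      rcases lt_or_eq_of_le hm.1 with h' | h'
      · exact h'
      · exfalso; rw [← h', hρ.1 i] at hαi; linarith
    set A := v '' (f i ⁻¹' {z}) with hAdef
    have hApos : ∃ a ∈ A, 0 < a := by
      by_contra hno
      push_neg at hno
      have : sSup A ≤ 0 := by
        rcases A.eq_empty_or_nonempty with hA | hA
        · rw [hA, Real.sSup_empty]
        · exact csSup_le hA hno
      exact absurd this (not_le.2 hm0)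
    have hWfin : ((fun l : List I => wfold f l y) '' {l | l.length = n}).Finite :=
      (List.finite_length_eq I n).image _
    have hsubP : {w | 0 < v w} ⊆ (fun l : List I => wfold f l y) '' {l | l.length = n} := by
      intro w hw
      obtain ⟨l, hl1, _, hl3⟩ := ih w (v w) hw le_rfl
      exact ⟨l, hl1, hl3⟩
    set Apos := A ∩ Set.Ioi (0:ℝ) with hAposdef
    have hfin : Apos.Finite := by
      refine Set.Finite.subset ((hWfin.image v)) ?_
      rintro a ⟨⟨w, hw1, rfl⟩, ha⟩
      exact ⟨w, hsubP ha, rfl⟩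
    have hne : Apos.Nonempty := by
      obtain ⟨a, ha1, ha2⟩ := hApos; exact ⟨a, ha1, ha2⟩
    obtain ⟨a, haA, hamax⟩ := Set.Finite.exists_maximalFor id Apos hfin hne
    have ha0 : 0 < a := haA.2
    have hma : m = a := by
      refine le_antisymm ?_ (le_csSup (bddAbove_image hvm _) haA.1)
      refine csSup_le ⟨a, haA.1⟩ ?_
      intro b hb
      rcases le_or_gt b 0 with hb0 | hb0
      · exact hb0.trans ha0.le
      · rcases le_or_gt b a with h' | h'
        · exact h'
        · exact hamax ⟨hb, hb0⟩ h'.le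
    obtain ⟨w, hwz, hwv⟩ := haA.1
    have hmv : m ≤ v w := by rw [hwv, ← hma]
    obtain ⟨l, hl1, hl2, hl3⟩ := ih w m hm0 hmv
    refine ⟨i :: l, by simp [hl1], ?_, ?_⟩
    · have : ρ i m ≤ ρ i (gfold ρ l) := hρ.2.1 i hm (gfold_mem hρ l) hl2
      exact le_trans hαi this
    · rw [wfold_cons, hl3]
      exact hwz

/-- Characterization of the level sets of the iterates of `Zop` on a crisp point. -/
lemma cut_iterate (hρ : Admissible ρ) (y : X) (n : ℕ) (α : ℝ) (hα : 0 < α) :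
    {z | α ≤ (Zop f ρ)^[n] (fdelta y) z}
      = (fun l : List I => wfold f l y) '' {l | l.length = n ∧ α ≤ gfold ρ l} := by
  ext z
  constructor
  · intro h
    obtain ⟨l, hl1, hl2, hl3⟩ := Zit_le_gfold hρ y n z α hα h
    exact ⟨l, ⟨hl1, hl2⟩, hl3⟩
  · rintro ⟨l, ⟨hl1, hl2⟩, rfl⟩
    subst hl1
    exact le_trans hl2 (gfold_le_Zit hρ y l)

end Aux2

section Aux3

variable {X I : Type*} [MetricSpace X] [DecidableEq X] [Finite I] [Nonempty I]
variable {f : I → X → X} {ρ : I → ℝ → ℝ}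

instance : Nonempty (Ioc (0:ℝ) 1) := ⟨⟨1, by norm_num⟩⟩

lemma dinfty_nonneg (u v : X → ℝ) : 0 ≤ dInfty u v :=
  Real.iSup_nonneg fun _ => hausdorffDist_nonneg

lemma dinfty_self (u : X → ℝ) : dInfty u u = 0 := by
  unfold dInfty
  simp [hausdorffDist_self_zero]

lemma dinfty_comm (u v : X → ℝ) : dInfty u v = dInfty v u := by
  unfold dInfty
  exact iSup_congr fun α => hausdorffDist_comm

lemma dinfty_le {u v : X → ℝ} {r : ℝ}
    (h : ∀ α : ℝ, 0 < α → α ≤ 1 → hausdorffDist {x | α ≤ u x} {x | α ≤ v x} ≤ r) :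
    dInfty u v ≤ r :=
  ciSup_le fun α => h α α.2.1 α.2.2

/-- A fuzzy set has good cuts within `S` if all its level sets (for `0 < α ≤ 1`) are
nonempty and contained in the bounded set `S`. -/
def GoodCuts (S : Set X) (v : X → ℝ) : Prop :=
  Bornology.IsBounded S ∧
    ∀ α : ℝ, 0 < α → α ≤ 1 → {x | α ≤ v x}.Nonempty ∧ {x | α ≤ v x} ⊆ S

lemma bddAbove_hdist {u v : X → ℝ} {Su Sv : Set X} (hu : GoodCuts Su u) (hv : GoodCuts Sv v) :
    BddAbove (Set.range fun α : Ioc (0:ℝ) 1 =>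
      hausdorffDist {x | (α:ℝ) ≤ u x} {x | (α:ℝ) ≤ v x}) := by
  refine ⟨Metric.diam (Su ∪ Sv), ?_⟩
  rintro _ ⟨α, rfl⟩
  obtain ⟨hu1, hu2⟩ := hu.2 α α.2.1 α.2.2
  obtain ⟨hv1, hv2⟩ := hv.2 α α.2.1 α.2.2
  calc hausdorffDist {x | (α:ℝ) ≤ u x} {x | (α:ℝ) ≤ v x}
      ≤ Metric.diam ({x | (α:ℝ) ≤ u x} ∪ {x | (α:ℝ) ≤ v x}) :=
        hausdorffDist_le_diam hu1 (hu.1.subset hu2) hv1 (hv.1.subset hv2)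
    _ ≤ Metric.diam (Su ∪ Sv) :=
        diam_mono (Set.union_subset_union hu2 hv2) (hu.1.union hv.1)

lemma le_dinfty {u v : X → ℝ} {Su Sv : Set X} (hu : GoodCuts Su u) (hv : GoodCuts Sv v)
    {α : ℝ} (hα1 : 0 < α) (hα2 : α ≤ 1) :
    hausdorffDist {x | α ≤ u x} {x | α ≤ v x} ≤ dInfty u v :=
  le_ciSup (bddAbove_hdist hu hv) ⟨α, hα1, hα2⟩

lemma dinfty_triangle {u v w : X → ℝ} {Su Sv Sw : Set X}
    (hu : GoodCuts Su u) (hv : GoodCuts Sv v) (hw : GoodCuts Sw w) :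
    dInfty u w ≤ dInfty u v + dInfty v w := by
  refine dinfty_le fun α hα1 hα2 => ?_
  have h1 := hausdorffDist_triangle (u := {x | α ≤ w x})
    (hausdorffEdist_ne_top_of_nonempty_of_bounded (hu.2 α hα1 hα2).1 (hv.2 α hα1 hα2).1
      (hu.1.subset (hu.2 α hα1 hα2).2) (hv.1.subset (hv.2 α hα1 hα2).2))
  exact h1.trans (add_le_add (le_dinfty hu hv hα1 hα2) (le_dinfty hv hw hα1 hα2))

lemma goodcuts_star {v : X → ℝ} (hv : IsFuzzyStar v) : GoodCuts (fsupp v) v := by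
  obtain ⟨⟨_, ⟨y, hy⟩, hcomp⟩, _⟩ := hv
  refine ⟨hcomp.isBounded, fun α hα1 hα2 => ⟨⟨y, by rw [Set.mem_setOf_eq, hy]; exact hα2⟩, ?_⟩⟩
  intro z hz
  exact subset_closure (lt_of_lt_of_le hα1 hz)

lemma goodcuts_Zit (hρ : Admissible ρ) (y : X) (n : ℕ) :
    GoodCuts ((fun l : List I => wfold f l y) '' {l | l.length = n})
      ((Zop f ρ)^[n] (fdelta y)) := by
  refine ⟨((List.finite_length_eq I n).image _).isBounded, fun α hα1 hα2 => ⟨?_, ?_⟩⟩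
  · obtain ⟨j, hj⟩ := hρ.2.2.2.2
    refine ⟨wfold f (List.replicate n j) y, ?_⟩
    rw [Set.mem_setOf_eq]
    have h1 := gfold_le_Zit (f := f) hρ y (List.replicate n j)
    rw [gfold_replicate hj, List.length_replicate] at h1
    exact le_trans hα2 h1
  · rw [cut_iterate hρ y n α hα1]
    exact Set.image_mono fun l hl => hl.1

end Aux3

section Aux4

variable {X I : Type*} [MetricSpace X] [DecidableEq X] [Finite I] [Nonempty I]
variable {f : I → X → X} {ρ : I → ℝ → ℝ} {C : ℝ}

/-- The basic displacement of a point. -/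
noncomputable def disp (f : I → X → X) (x : X) : ℝ := ⨆ i, dist (f i x) x

lemma disp_nonneg (f : I → X → X) (x : X) : 0 ≤ disp f x :=
  Real.iSup_nonneg fun _ => dist_nonneg

lemma dist_le_disp (f : I → X → X) (x : X) (i : I) : dist (f i x) x ≤ disp f x :=
  le_ciSup (f := fun i => dist (f i x) x) (Set.Finite.bddAbove (Set.finite_range _)) i

lemma disp_le {x : X} {r : ℝ} (h : ∀ i, dist (f i x) x ≤ r) : disp f x ≤ r :=
  ciSup_le h

/-- One-step estimate between consecutive iterates. -/
lemma dinfty_succ (hρ : Admissible ρ) (horb : OrbitalContr f C) (hC0 : 0 ≤ C)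
    (x : X) (n : ℕ) :
    dInfty ((Zop f ρ)^[n+1] (fdelta x)) ((Zop f ρ)^[n] (fdelta x)) ≤ C ^ n * disp f x := by
  have hx : x ∈ orbitIFS f x := wfold_mem_orbit f [] x
  have hr : 0 ≤ C ^ n * disp f x := mul_nonneg (pow_nonneg hC0 n) (disp_nonneg f x)
  refine dinfty_le fun α hα1 hα2 => ?_
  rw [cut_iterate hρ x (n+1) α hα1, cut_iterate hρ x n α hα1]
  apply hausdorffDist_le_of_mem_dist hr
  · rintro _ ⟨l, ⟨hlen, hg⟩, rfl⟩
    rcases List.eq_nil_or_concat l with rfl | ⟨L, i0, rfl⟩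
    · simp at hlen
    · have hL : L.length = n := by simpa using hlen
      refine ⟨wfold f L x, ⟨L, ⟨hL, ?_⟩, rfl⟩, ?_⟩
      · refine hg.trans ?_
        rw [List.concat_eq_append]
        exact gfold_concat_le hρ L i0
      · show dist (wfold f (L.concat i0) x) (wfold f L x) ≤ C ^ n * disp f x
        rw [List.concat_eq_append, wfold_append]
        have h1 : dist (wfold f L (wfold f [i0] x)) (wfold f L x)
            ≤ C ^ L.length * dist (wfold f [i0] x) x :=
          dist_wfold horb hC0 (wfold_mem_orbit f [i0] x) hx L
        refine h1.trans ?_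
        rw [hL]
        exact mul_le_mul_of_nonneg_left (dist_le_disp f x i0) (pow_nonneg hC0 n)
  · rintro _ ⟨l, ⟨hlen, hg⟩, rfl⟩
    obtain ⟨j, hj⟩ := hρ.2.2.2.2
    refine ⟨wfold f (l ++ [j]) x, ⟨l ++ [j], ⟨by simp [hlen], ?_⟩, rfl⟩, ?_⟩
    · rw [gfold_concat_one hρ l hj]; exact hg
    · show dist (wfold f l x) (wfold f (l ++ [j]) x) ≤ C ^ n * disp f x
      rw [wfold_append]
      have h1 : dist (wfold f l x) (wfold f l (wfold f [j] x))
          ≤ C ^ l.length * dist x (wfold f [j] x) :=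
        dist_wfold horb hC0 hx (wfold_mem_orbit f [j] x) l
      refine h1.trans ?_
      rw [hlen, dist_comm]
      exact mul_le_mul_of_nonneg_left (dist_le_disp f x j) (pow_nonneg hC0 n)

lemma geom_sum_le_inv (hC0 : 0 ≤ C) (hC1 : C < 1) (p : ℕ) :
    ∑ k ∈ Finset.range p, C ^ k ≤ (1 - C)⁻¹ := by
  have h1 : 0 < 1 - C := by linarith
  rw [geom_sum_eq hC1.ne]
  have h2 : (C ^ p - 1) / (C - 1) = (1 - C ^ p) / (1 - C) := by
    rw [← neg_div_neg_eq]; ring_nf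
  have h3 : 1 - C ^ p ≤ 1 := by nlinarith [pow_nonneg hC0 p]
  rw [h2, ← one_div]
  gcongr

lemma dinfty_iter_aux (hρ : Admissible ρ) (horb : OrbitalContr f C) (hC0 : 0 ≤ C)
    (x : X) (n : ℕ) :
    ∀ p, dInfty ((Zop f ρ)^[n] (fdelta x)) ((Zop f ρ)^[n+p] (fdelta x))
      ≤ (∑ k ∈ Finset.range p, C ^ (n + k)) * disp f x := by
  intro p
  induction p with
  | zero => simp [dinfty_self]
  | succ p ih =>
    have htri := dinfty_triangle (goodcuts_Zit (f := f) hρ x n)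
      (goodcuts_Zit (f := f) hρ x (n+p)) (goodcuts_Zit (f := f) hρ x (n+p+1))
    have hstep : dInfty ((Zop f ρ)^[n+p] (fdelta x)) ((Zop f ρ)^[n+p+1] (fdelta x))
        ≤ C ^ (n+p) * disp f x := by
      rw [dinfty_comm]; exact dinfty_succ hρ horb hC0 x (n+p)
    have hend : n + (p + 1) = n + p + 1 := by omega
    rw [hend, Finset.sum_range_succ, add_mul]
    exact htri.trans (add_le_add ih hstep)

/-- Telescoping estimate. -/
lemma dinfty_iterates (hρ : Admissible ρ) (horb : OrbitalContr f C) (hC0 : 0 ≤ C) (hC1 : C < 1)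
    (x : X) (n m : ℕ) (hnm : n ≤ m) :
    dInfty ((Zop f ρ)^[n] (fdelta x)) ((Zop f ρ)^[m] (fdelta x))
      ≤ C ^ n * disp f x * (1 - C)⁻¹ := by
  obtain ⟨p, rfl⟩ := Nat.exists_eq_add_of_le hnm
  refine (dinfty_iter_aux hρ horb hC0 x n p).trans ?_
  have h1 : ∑ k ∈ Finset.range p, C ^ (n + k) = C ^ n * ∑ k ∈ Finset.range p, C ^ k := by
    rw [Finset.mul_sum]
    exact Finset.sum_congr rfl fun k _ => by rw [pow_add]
  have h2 : C ^ n * (∑ k ∈ Finset.range p, C ^ k) ≤ C ^ n * (1 - C)⁻¹ :=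
    mul_le_mul_of_nonneg_left (geom_sum_le_inv hC0 hC1 p) (pow_nonneg hC0 n)
  calc (∑ k ∈ Finset.range p, C ^ (n + k)) * disp f x
      ≤ (C ^ n * (1 - C)⁻¹) * disp f x := by
        rw [h1]; exact mul_le_mul_of_nonneg_right h2 (disp_nonneg f x)
    _ = C ^ n * disp f x * (1 - C)⁻¹ := by ring

/-- Distance from an iterate to the limit. -/
lemma dinfty_limit (hρ : Admissible ρ) (horb : OrbitalContr f C) (hC0 : 0 ≤ C) (hC1 : C < 1)
    (x : X) (V : X → ℝ) (hV : IsFuzzyStar V)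
    (hlim : Tendsto (fun n => dInfty ((Zop f ρ)^[n] (fdelta x)) V) atTop (nhds 0)) (n : ℕ) :
    dInfty ((Zop f ρ)^[n] (fdelta x)) V ≤ C ^ n * disp f x * (1 - C)⁻¹ := by
  have hbound : ∀ m, n ≤ m → dInfty ((Zop f ρ)^[n] (fdelta x)) V
      ≤ C ^ n * disp f x * (1 - C)⁻¹ + dInfty ((Zop f ρ)^[m] (fdelta x)) V := fun m hm =>
    (dinfty_triangle (goodcuts_Zit (f := f) hρ x n) (goodcuts_Zit (f := f) hρ x m)
      (goodcuts_star hV)).trans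
      (add_le_add_left (dinfty_iterates hρ horb hC0 hC1 x n m hm) _)
  have htend : Tendsto (fun m => C ^ n * disp f x * (1 - C)⁻¹
      + dInfty ((Zop f ρ)^[m] (fdelta x)) V) atTop
      (nhds (C ^ n * disp f x * (1 - C)⁻¹ + 0)) := tendsto_const_nhds.add hlim
  have h := ge_of_tendsto htend (eventually_atTop.2 ⟨n, hbound⟩)
  simpa using h

/-- Same words at nearby basepoints. -/
lemma dinfty_same_words (hρ : Admissible ρ) {y x : X} {n : ℕ} {ε : ℝ} (hε : 0 ≤ ε)
    (h : ∀ l : List I, l.length = n → dist (wfold f l y) (wfold f l x) ≤ ε) :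
    dInfty ((Zop f ρ)^[n] (fdelta y)) ((Zop f ρ)^[n] (fdelta x)) ≤ ε := by
  refine dinfty_le fun α hα1 hα2 => ?_
  rw [cut_iterate hρ y n α hα1, cut_iterate hρ x n α hα1]
  apply hausdorffDist_le_of_mem_dist hε
  · rintro _ ⟨l, hl, rfl⟩
    exact ⟨wfold f l x, ⟨l, hl, rfl⟩, h l hl.1⟩
  · rintro _ ⟨l, hl, rfl⟩
    exact ⟨wfold f l y, ⟨l, hl, rfl⟩, by rw [dist_comm]; exact h l hl.1⟩

end Aux4

/-- Proposition 3.3: the map `x ↦ u_x` is continuous from `[u]^*`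
to `(F*_X, d_∞)`. -/
theorem stmt8 {X I : Type*} [MetricSpace X] [CompleteSpace X] [DecidableEq X]
    [Finite I] [Nonempty I]
    (f : I → X → X) (hcont : ∀ i, Continuous (f i))
    (C : ℝ) (hC0 : 0 ≤ C) (hC1 : C < 1) (horb : OrbitalContr f C)
    (ρ : I → ℝ → ℝ) (hρ : Admissible ρ)
    (u : X → ℝ) (hu : InFS f u)
    (U : X → X → ℝ) (hUStar : ∀ x, 0 < u x → IsFuzzyStar (U x))
    (hU : ∀ x, 0 < u x →
      Tendsto (fun n => dInfty ((Zop f ρ)^[n] (fdelta x)) (U x)) atTop (nhds 0)) :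
    ∀ x, 0 < u x → ∀ (xs : ℕ → X), (∀ n, 0 < u (xs n)) →
      Tendsto xs atTop (nhds x) →
      Tendsto (fun n => dInfty (U (xs n)) (U x)) atTop (nhds 0) := by
  intro x hux xs hxs hten
  rw [Metric.tendsto_atTop]
  intro ε hε
  have h1C : 0 < 1 - C := by linarith
  have hinv : (0:ℝ) ≤ (1 - C)⁻¹ := (inv_pos.2 h1C).le
  set B := (disp f x + 2) * (1 - C)⁻¹ with hB
  have hCn : Tendsto (fun n : ℕ => C ^ n * B) atTop (nhds 0) := by
    simpa using (tendsto_pow_atTop_nhds_zero_of_lt_one hC0 hC1).mul_const B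
  obtain ⟨n, hn⟩ := (hCn.eventually (gt_mem_nhds (show (0:ℝ) < ε/4 by linarith))).exists
  have hev1 : ∀ᶠ k in atTop, ∀ i : I, dist (f i (xs k)) (f i x) ≤ 1 := by
    rw [eventually_all]
    intro i
    have ht := ((hcont i).tendsto x).comp hten
    exact (ht.eventually (closedBall_mem_nhds (f i x) one_pos)).mono
      fun k hk => mem_closedBall.1 hk
  have hev2 : ∀ᶠ k in atTop, dist (xs k) x ≤ 1 :=
    (hten.eventually (closedBall_mem_nhds x one_pos)).mono fun k hk => mem_closedBall.1 hk
  have hev3 : ∀ᶠ k in atTop, ∀ l ∈ {l : List I | l.length = n},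
      dist (wfold f l (xs k)) (wfold f l x) ≤ ε/4 := by
    rw [eventually_all_finite (List.finite_length_eq I n)]
    intro l _
    have ht := ((continuous_wfold f hcont l).tendsto x).comp hten
    exact (ht.eventually (closedBall_mem_nhds _ (show (0:ℝ) < ε/4 by linarith))).mono
      fun k hk => mem_closedBall.1 hk
  have hfinal : ∀ᶠ k in atTop, dist (dInfty (U (xs k)) (U x)) 0 < ε := by
    filter_upwards [hev1, hev2, hev3] with k h1 h2 h3
    set y := xs k with hy
    have huy : 0 < u y := hxs k
    have hdisp : disp f y ≤ disp f x + 2 := by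
      refine disp_le fun i => ?_
      calc dist (f i y) y ≤ dist (f i y) (f i x) + dist (f i x) x + dist x y :=
            dist_triangle4 (f i y) (f i x) x y
        _ ≤ 1 + disp f x + 1 := by
            refine add_le_add (add_le_add (h1 i) (dist_le_disp f x i)) ?_
            rw [dist_comm]; exact h2
        _ = disp f x + 2 := by ring
    have gcUy := goodcuts_star (hUStar y huy)
    have gcUx := goodcuts_star (hUStar x hux)
    have gcZy := goodcuts_Zit (f := f) hρ y n
    have gcZx := goodcuts_Zit (f := f) hρ x n
    have t1 : dInfty (U y) ((Zop f ρ)^[n] (fdelta y)) ≤ C ^ n * disp f y * (1 - C)⁻¹ := by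
      rw [dinfty_comm]
      exact dinfty_limit hρ horb hC0 hC1 y (U y) (hUStar y huy) (hU y huy) n
    have t3 : dInfty ((Zop f ρ)^[n] (fdelta x)) (U x) ≤ C ^ n * disp f x * (1 - C)⁻¹ :=
      dinfty_limit hρ horb hC0 hC1 x (U x) (hUStar x hux) (hU x hux) n
    have t2 : dInfty ((Zop f ρ)^[n] (fdelta y)) ((Zop f ρ)^[n] (fdelta x)) ≤ ε/4 :=
      dinfty_same_words hρ (by linarith) (fun l hl => h3 l hl)
    have tri1 : dInfty (U y) (U x) ≤ dInfty (U y) ((Zop f ρ)^[n] (fdelta y))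
        + (dInfty ((Zop f ρ)^[n] (fdelta y)) ((Zop f ρ)^[n] (fdelta x))
          + dInfty ((Zop f ρ)^[n] (fdelta x)) (U x)) :=
      (dinfty_triangle gcUy gcZy gcUx).trans (add_le_add_right (dinfty_triangle gcZy gcZx gcUx) _)
    have b1 : C ^ n * disp f y * (1 - C)⁻¹ ≤ C ^ n * B := by
      have h4 : C ^ n * disp f y ≤ C ^ n * (disp f x + 2) :=
        mul_le_mul_of_nonneg_left hdisp (pow_nonneg hC0 n)
      calc C ^ n * disp f y * (1 - C)⁻¹ ≤ C ^ n * (disp f x + 2) * (1 - C)⁻¹ :=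
            mul_le_mul_of_nonneg_right h4 hinv
        _ = C ^ n * B := by rw [hB]; ring
    have b3 : C ^ n * disp f x * (1 - C)⁻¹ ≤ C ^ n * B := by
      have h4 : C ^ n * disp f x ≤ C ^ n * (disp f x + 2) :=
        mul_le_mul_of_nonneg_left (by linarith [disp_nonneg f x]) (pow_nonneg hC0 n)
      calc C ^ n * disp f x * (1 - C)⁻¹ ≤ C ^ n * (disp f x + 2) * (1 - C)⁻¹ :=
            mul_le_mul_of_nonneg_right h4 hinv
        _ = C ^ n * B := by rw [hB]; ring
    have hlt : dInfty (U y) (U x) < ε := by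
      have hsum := tri1.trans (add_le_add (t1.trans b1) (add_le_add t2 (t3.trans b3)))
      linarith
    rw [Real.dist_eq, sub_zero, abs_of_nonneg (dinfty_nonneg _ _)]
    exact hlt
  exact eventually_atTop.1 hfinal
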